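/- Let E ⊂ ℝ^n be nonempty and compact, θ ∈ (0,1] and 1 ≤ m₁ ≤ m₂ ≤ n. Then \underline{dim}_θ^{m₁} E ≤ \underline{dim}_θ^{m₂} E and \overline{dim}_θ^{m₁} E ≤ \overline{dim}_θ^{m₂} E. -/

import Mathlib

open MeasureTheory Metric Set Filter Topology
open scoped ENNReal NNReal

noncomputable section

/-- Euclidean space `ℝ^n`. -/
abbrev Euc (n : ℕ) := EuclideanSpace ℝ (Fin n)

instance matrixMeasurableSpace (n : ℕ) : MeasurableSpace (Matrix (Fin n) (Fin n) ℝ) :=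
  inferInstanceAs (MeasurableSpace (Fin n → Fin n → ℝ))

/-- The restricted covering sum `S_{r,θ}^s(E)`: the infimum of `Σ_i |U_i|^s` over all
countable covers `{U_i}` of `E` with `r ≤ |U_i| ≤ r^θ`, valued in `ℝ≥0∞`. -/
def coverSum (n : ℕ) (E : Set (Euc n)) (θ s r : ℝ) : ℝ≥0∞ :=
  sInf { T : ℝ≥0∞ | ∃ 𝒰 : Set (Set (Euc n)), 𝒰.Countable ∧ E ⊆ ⋃₀ 𝒰 ∧
    (∀ U ∈ 𝒰, r ≤ diam U ∧ diam U ≤ r ^ θ) ∧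
    T = ∑' U : 𝒰, ENNReal.ofReal (diam (U : Set (Euc n)) ^ s) }

/-- Real-valued version of `coverSum`. -/
def Sval (n : ℕ) (E : Set (Euc n)) (θ s r : ℝ) : ℝ := (coverSum n E θ s r).toReal

/-- The quotient `log S_{r,θ}^s(E) / (-log r)`. -/
def Squot (n : ℕ) (E : Set (Euc n)) (θ s r : ℝ) : ℝ :=
  Real.log (Sval n E θ s r) / (-Real.log r)

/-- `N_δ(E)`: the smallest number of sets of diameter at most `δ` needed to cover `E`. -/
def covNum (n : ℕ) (E : Set (Euc n)) (δ : ℝ) : ℕ :=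
  sInf { k : ℕ | ∃ U : Fin k → Set (Euc n), E ⊆ ⋃ i, U i ∧ ∀ i, diam (U i) ≤ δ }

/-- The lower box-counting dimension of `E`. -/
def lowerBoxDim (n : ℕ) (E : Set (Euc n)) : ℝ :=
  liminf (fun δ : ℝ => Real.log (covNum n E δ) / (-Real.log δ)) (𝓝[>] 0)

/-- The upper box-counting dimension of `E`. -/
def upperBoxDim (n : ℕ) (E : Set (Euc n)) : ℝ :=
  limsup (fun δ : ℝ => Real.log (covNum n E δ) / (-Real.log δ)) (𝓝[>] 0)

/-- The kernel `φ_{r,θ}^{s,m}`. -/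
def phiK (n : ℕ) (m s θ r : ℝ) (x : Euc n) : ℝ :=
  if ‖x‖ < r then 1
  else if ‖x‖ < r ^ θ then (r / ‖x‖) ^ s
  else r ^ (θ * (m - s) + s) / ‖x‖ ^ m

/-- The kernel `φ̃_{r,θ}^s`. -/
def phiT (n : ℕ) (s θ r : ℝ) (x : Euc n) : ℝ :=
  if ‖x‖ < r then 1
  else if ‖x‖ ≤ r ^ θ then (r / ‖x‖) ^ s
  else 0

/-- The kernel `φ_r^m(x) = min{1, (r/|x|)^m}`. -/
def phiB (n : ℕ) (m r : ℝ) (x : Euc n) : ℝ :=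
  if ‖x‖ ≤ r then 1 else (r / ‖x‖) ^ m

/-- The energy `∬ φ(x-y) dμ(x)dμ(y)` of a measure with respect to a kernel `φ`. -/
def energy (n : ℕ) (φ : Euc n → ℝ) (μ : Measure (Euc n)) : ℝ :=
  ∫ x, ∫ y, φ (x - y) ∂μ ∂μ

/-- The potential `∫ φ(x-y) dμ(y)` of a measure at `x` with respect to a kernel `φ`. -/
def potential (n : ℕ) (φ : Euc n → ℝ) (μ : Measure (Euc n)) (x : Euc n) : ℝ :=
  ∫ y, φ (x - y) ∂μ

/-- `μ` is a Borel probability measure supported on `E`. -/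
def PMeasOn (n : ℕ) (E : Set (Euc n)) (μ : Measure (Euc n)) : Prop :=
  IsProbabilityMeasure μ ∧ μ Eᶜ = 0

/-- The capacity `C_{r,θ}^{s,m}(E)`: the reciprocal of the infimal energy of Borel
probability measures supported on `E` with respect to the kernel `φ_{r,θ}^{s,m}`. -/
def capacity (n : ℕ) (m s θ r : ℝ) (E : Set (Euc n)) : ℝ :=
  (sInf { e : ℝ | ∃ μ : Measure (Euc n), PMeasOn n E μ ∧ e = energy n (phiK n m s θ r) μ })⁻¹

/-- The quotient `log C_{r,θ}^{s,m}(E) / (-log r)`. -/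
def Cquot (n : ℕ) (m s θ : ℝ) (E : Set (Euc n)) (r : ℝ) : ℝ :=
  Real.log (capacity n m s θ r E) / (-Real.log r)

/-- `d` is the lower intermediate dimension `\underline{dim}_θ E`, i.e. the unique
`s ∈ [0,n]` such that `liminf_{r→0} log S_{r,θ}^s(E) / (-log r) = 0`. -/
def IsLowerInterDim (n : ℕ) (θ : ℝ) (E : Set (Euc n)) (d : ℝ) : Prop :=
  d ∈ Icc (0:ℝ) n ∧ liminf (fun r => Squot n E θ d r) (𝓝[>] 0) = 0

/-- `d` is the upper intermediate dimension `\overline{dim}_θ E`. -/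
def IsUpperInterDim (n : ℕ) (θ : ℝ) (E : Set (Euc n)) (d : ℝ) : Prop :=
  d ∈ Icc (0:ℝ) n ∧ limsup (fun r => Squot n E θ d r) (𝓝[>] 0) = 0

/-- `d` is the lower intermediate dimension profile `\underline{dim}_θ^m E`, i.e. the unique
`s ∈ [0,m]` such that `liminf_{r→0} log C_{r,θ}^{s,m}(E) / (-log r) = s`; for bounded sets the
capacity is that of the closure. -/
def IsLowerDimProfile (n m : ℕ) (θ : ℝ) (E : Set (Euc n)) (d : ℝ) : Prop :=
  d ∈ Icc (0:ℝ) m ∧ liminf (fun r => Cquot n m d θ (closure E) r) (𝓝[>] 0) = d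

/-- `d` is the upper intermediate dimension profile `\overline{dim}_θ^m E`. -/
def IsUpperDimProfile (n m : ℕ) (θ : ℝ) (E : Set (Euc n)) (d : ℝ) : Prop :=
  d ∈ Icc (0:ℝ) m ∧ limsup (fun r => Cquot n m d θ (closure E) r) (𝓝[>] 0) = d

/-- `P` is the matrix of an orthogonal projection of `ℝ^n` onto an `m`-dimensional subspace;
such matrices parametrise the Grassmannian `G(n,m)`. -/
def IsProjMat (n m : ℕ) (P : Matrix (Fin n) (Fin n) ℝ) : Prop :=
  P.transpose = P ∧ P * P = P ∧ P.rank = m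

/-- The orthogonal projection map `π_V` associated to a projection matrix. -/
def projMap (n : ℕ) (P : Matrix (Fin n) (Fin n) ℝ) : Euc n → Euc n :=
  fun x => Matrix.toEuclideanLin P x

/-- `γ` is the natural invariant measure `γ_{n,m}` on the Grassmannian `G(n,m)` (realised as
the space of orthogonal projection matrices of rank `m`): a probability measure supported on
the rank-`m` orthogonal projections and invariant under the action of the orthogonal group. -/
def IsGrassMeasure (n m : ℕ) (γ : Measure (Matrix (Fin n) (Fin n) ℝ)) : Prop :=
  IsProbabilityMeasure γ ∧ γ {P | IsProjMat n m P}ᶜ = 0 ∧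
  ∀ A ∈ Matrix.orthogonalGroup (Fin n) ℝ,
    Measure.map (fun P => A * P * A.transpose) γ = γ
namespace S6

variable {n : ℕ}

lemma phiK_nonneg {m s θ r : ℝ} (hr : 0 ≤ r) (x : Euc n) : 0 ≤ phiK n m s θ r x := by
  unfold phiK
  split_ifs with h1 h2
  · norm_num
  · exact Real.rpow_nonneg (div_nonneg hr (norm_nonneg x)) s
  · exact div_nonneg (Real.rpow_nonneg hr _) (Real.rpow_nonneg (norm_nonneg x) m)

lemma phiK_le_one {m s θ r : ℝ} (hr : 0 < r) (hr1 : r ≤ 1) (hs : 0 ≤ s) (hsm : s ≤ m)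
    (hθ : 0 < θ) (hθ1 : θ ≤ 1) (x : Euc n) : phiK n m s θ r x ≤ 1 := by
  unfold phiK
  split_ifs with h1 h2
  · exact le_refl _
  · exact Real.rpow_le_one (div_nonneg hr.le (norm_nonneg x))
      (div_le_one_of_le₀ (not_lt.1 h1) (norm_nonneg x)) hs
  · have hx : r ^ θ ≤ ‖x‖ := not_lt.1 h2
    have hrθ : (0:ℝ) < r ^ θ := Real.rpow_pos_of_pos hr θ
    have hxpos : (0:ℝ) < ‖x‖ := lt_of_lt_of_le hrθ hx
    rw [div_le_one (Real.rpow_pos_of_pos hxpos m)]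
    calc r ^ (θ * (m - s) + s) ≤ r ^ (θ * m) :=
          Real.rpow_le_rpow_of_exponent_ge hr hr1 (by nlinarith)
      _ = (r ^ θ) ^ m := by rw [← Real.rpow_mul hr.le]
      _ ≤ ‖x‖ ^ m := Real.rpow_le_rpow hrθ.le hx (le_trans hs hsm)

lemma phiK_anti_m {m₁ m₂ s θ r : ℝ} (hr : 0 < r) (hr1 : r ≤ 1) (hs : 0 ≤ s)
    (hθ : 0 < θ) (hθ1 : θ ≤ 1) (hm : m₁ ≤ m₂) (x : Euc n) :
    phiK n m₂ s θ r x ≤ phiK n m₁ s θ r x := by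
  unfold phiK
  split_ifs with h1 h2
  · exact le_refl _
  · exact le_refl _
  · have hx : r ^ θ ≤ ‖x‖ := not_lt.1 h2
    have hrθ : (0:ℝ) < r ^ θ := Real.rpow_pos_of_pos hr θ
    have hxpos : (0:ℝ) < ‖x‖ := lt_of_lt_of_le hrθ hx
    have key : ∀ m : ℝ, r ^ (θ * (m - s) + s) / ‖x‖ ^ m
        = r ^ (s * (1 - θ)) * (r ^ θ / ‖x‖) ^ m := by
      intro m
      rw [Real.div_rpow (Real.rpow_nonneg hr.le θ) (norm_nonneg x),
        ← Real.rpow_mul hr.le, ← mul_div_assoc, ← Real.rpow_add hr]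
      congr 1
      ring
    rw [key m₁, key m₂]
    have hb0 : (0:ℝ) < r ^ θ / ‖x‖ := div_pos hrθ hxpos
    have hb1 : r ^ θ / ‖x‖ ≤ 1 := div_le_one_of_le₀ hx (norm_nonneg x)
    exact mul_le_mul_of_nonneg_left
      (Real.rpow_le_rpow_of_exponent_ge hb0 hb1 hm) (Real.rpow_nonneg hr.le _)

lemma phiK_anti_s {m s t θ r : ℝ} (hr : 0 < r) (hr1 : r ≤ 1)
    (hθ : 0 < θ) (hθ1 : θ ≤ 1) (hst : s ≤ t) (x : Euc n) :
    phiK n m t θ r x ≤ phiK n m s θ r x := by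
  unfold phiK
  split_ifs with h1 h2
  · exact le_refl _
  · have hxr : r ≤ ‖x‖ := not_lt.1 h1
    have hxpos : (0:ℝ) < ‖x‖ := lt_of_lt_of_le hr hxr
    exact Real.rpow_le_rpow_of_exponent_ge (div_pos hr hxpos)
      (div_le_one_of_le₀ hxr (norm_nonneg x)) hst
  · have hx : r ^ θ ≤ ‖x‖ := not_lt.1 h2
    have hrθ : (0:ℝ) < r ^ θ := Real.rpow_pos_of_pos hr θ
    have hxpos : (0:ℝ) < ‖x‖ := lt_of_lt_of_le hrθ hx
    have hX : (0:ℝ) < ‖x‖ ^ m := Real.rpow_pos_of_pos hxpos m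
    exact div_le_div_of_nonneg_right
      (Real.rpow_le_rpow_of_exponent_ge hr hr1 (by nlinarith)) hX.le

lemma phiK_le_kappa_mul {m s t θ r : ℝ} (hr : 0 < r) (hr1 : r ≤ 1) (hs : 0 ≤ s)
    (hst : s ≤ t) (hθ : 0 < θ) (hθ1 : θ ≤ 1) (x : Euc n) :
    phiK n m s θ r x ≤ r ^ ((θ - 1) * (t - s)) * phiK n m t θ r x := by
  have hκ : (1:ℝ) ≤ r ^ ((θ - 1) * (t - s)) :=
    Real.one_le_rpow_of_pos_of_le_one_of_nonpos hr hr1 (by nlinarith)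
  unfold phiK
  split_ifs with h1 h2
  · simpa using hκ
  · have hxr : r ≤ ‖x‖ := not_lt.1 h1
    have hxθ : ‖x‖ < r ^ θ := h2
    have hxpos : (0:ℝ) < ‖x‖ := lt_of_lt_of_le hr hxr
    have hbpos : (0:ℝ) < r / ‖x‖ := div_pos hr hxpos
    have hsplit : (r / ‖x‖) ^ s = (r / ‖x‖) ^ (s - t) * (r / ‖x‖) ^ t := by
      rw [← Real.rpow_add hbpos]; ring_nf
    rw [hsplit]
    refine mul_le_mul_of_nonneg_right ?_ (Real.rpow_nonneg hbpos.le t)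
    have e1 : (r / ‖x‖) ^ (s - t) = (‖x‖ / r) ^ (t - s) := by
      have : s - t = -(t - s) := by ring
      rw [this, Real.rpow_neg hbpos.le, ← Real.inv_rpow (div_nonneg hr.le hxpos.le), inv_div]
    rw [e1]
    calc (‖x‖ / r) ^ (t - s) ≤ (r ^ θ / r) ^ (t - s) :=
          Real.rpow_le_rpow (div_nonneg hxpos.le hr.le)
            (div_le_div_of_nonneg_right hxθ.le hr.le) (by linarith)
      _ = r ^ ((θ - 1) * (t - s)) := by
          have h : r ^ θ / r = r ^ (θ - 1) := by
            rw [Real.rpow_sub hr, Real.rpow_one]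
          rw [h, ← Real.rpow_mul hr.le]
  · have hx : r ^ θ ≤ ‖x‖ := not_lt.1 h2
    rw [← mul_div_assoc, ← Real.rpow_add hr]
    have : θ * (m - s) + s = (θ - 1) * (t - s) + (θ * (m - t) + t) := by ring
    rw [this]

end S6

namespace S6

lemma phiK_lower {n : ℕ} {m s θ r : ℝ} (hr : 0 < r) (hr1 : r ≤ 1) (hs : 0 ≤ s) (hsm : s ≤ m)
    (hθ : 0 < θ) (hθ1 : θ ≤ 1) {D : ℝ} (hD : 1 ≤ D) (x : Euc n) (hx : ‖x‖ ≤ D) :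
    r ^ (θ * (m - s) + s) / D ^ m ≤ phiK n m s θ r x := by
  have hm0 : 0 ≤ m := le_trans hs hsm
  have hD0 : (0:ℝ) < D := lt_of_lt_of_le one_pos hD
  have hDm : (1:ℝ) ≤ D ^ m := Real.one_le_rpow hD hm0
  have hDm0 : (0:ℝ) < D ^ m := lt_of_lt_of_le one_pos hDm
  have hexp : 0 ≤ θ * (m - s) + s := by nlinarith
  have hnum1 : r ^ (θ * (m - s) + s) ≤ 1 := Real.rpow_le_one hr.le hr1 hexp
  unfold phiK
  split_ifs with h1 h2
  · calc r ^ (θ * (m - s) + s) / D ^ m ≤ r ^ (θ * (m - s) + s) / 1 :=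
          div_le_div_of_nonneg_left (Real.rpow_nonneg hr.le _) one_pos hDm
    _ ≤ 1 := by rw [div_one]; exact hnum1
  · have hxr : r ≤ ‖x‖ := not_lt.1 h1
    have hxpos : (0:ℝ) < ‖x‖ := lt_of_lt_of_le hr hxr
    have hx1 : ‖x‖ ≤ 1 := le_trans h2.le (Real.rpow_le_one hr.le hr1 hθ.le)
    calc r ^ (θ * (m - s) + s) / D ^ m ≤ r ^ (θ * (m - s) + s) / 1 :=
          div_le_div_of_nonneg_left (Real.rpow_nonneg hr.le _) one_pos hDm
    _ = r ^ (θ * (m - s) + s) := div_one _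
    _ ≤ r ^ s := Real.rpow_le_rpow_of_exponent_ge hr hr1 (by nlinarith)
    _ ≤ (r / ‖x‖) ^ s := by
        refine Real.rpow_le_rpow hr.le ?_ hs
        calc r = r / 1 := (div_one r).symm
        _ ≤ r / ‖x‖ := div_le_div_of_nonneg_left hr.le hxpos hx1
  · exact div_le_div_of_nonneg_left (Real.rpow_nonneg hr.le _)
      (Real.rpow_pos_of_pos (lt_of_lt_of_le (Real.rpow_pos_of_pos hr θ) (not_lt.1 h2)) m)
      (Real.rpow_le_rpow (norm_nonneg x) hx hm0)

variable {n : ℕ}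

lemma integrable_shift {φ : Euc n → ℝ} (hφ : Measurable φ) {B : ℝ} (hB : ∀ z, |φ z| ≤ B)
    (μ : Measure (Euc n)) [IsFiniteMeasure μ] (x : Euc n) :
    Integrable (fun y => φ (x - y)) μ := by
  have hmeas : Measurable fun y : Euc n => φ (x - y) :=
    hφ.comp (measurable_const.sub measurable_id)
  exact (integrable_const B).mono' hmeas.aestronglyMeasurable
    (Eventually.of_forall fun y => by simpa [Real.norm_eq_abs] using hB (x - y))

lemma potential_sm {φ : Euc n → ℝ} (hφ : Measurable φ) (μ : Measure (Euc n)) [SFinite μ] :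
    StronglyMeasurable (fun x => ∫ y, φ (x - y) ∂μ) := by
  have h : StronglyMeasurable fun p : Euc n × Euc n => φ (p.1 - p.2) :=
    (hφ.comp (measurable_fst.sub measurable_snd)).stronglyMeasurable
  exact h.integral_prod_right'

lemma potential_integrable {φ : Euc n → ℝ} (hφ : Measurable φ) {B : ℝ} (hB : ∀ z, |φ z| ≤ B)
    (μ : Measure (Euc n)) [IsProbabilityMeasure μ] :
    Integrable (fun x => ∫ y, φ (x - y) ∂μ) μ := by
  refine (integrable_const B).mono' ((potential_sm hφ μ).aestronglyMeasurable) ?_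
  refine Eventually.of_forall fun x => ?_
  have := norm_integral_le_of_norm_le_const (μ := μ) (f := fun y => φ (x - y))
    (Eventually.of_forall fun y => by simpa [Real.norm_eq_abs] using hB (x - y))
  simpa using this

lemma energy_mono {φ ψ : Euc n → ℝ} (hφ : Measurable φ) (hψ : Measurable ψ)
    (hφ0 : ∀ z, 0 ≤ φ z) (hφψ : ∀ z, φ z ≤ ψ z) {B : ℝ} (hψB : ∀ z, ψ z ≤ B)
    (μ : Measure (Euc n)) [IsProbabilityMeasure μ] :
    energy n φ μ ≤ energy n ψ μ := by
  have hφB : ∀ z, |φ z| ≤ B := fun z => abs_le.2 ⟨by nlinarith [hφ0 z, hφψ z, hψB z], le_trans (hφψ z) (hψB z)⟩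
  have hψ0 : ∀ z, 0 ≤ ψ z := fun z => le_trans (hφ0 z) (hφψ z)
  have hψB' : ∀ z, |ψ z| ≤ B := fun z => abs_le.2 ⟨by nlinarith [hψ0 z, hψB z], hψB z⟩
  refine integral_mono (potential_integrable hφ hφB μ) (potential_integrable hψ hψB' μ) ?_
  intro x
  exact integral_mono (integrable_shift hφ hφB μ x) (integrable_shift hψ hψB' μ x)
    (fun y => hφψ (x - y))

lemma energy_nonneg {φ : Euc n → ℝ} (hφ0 : ∀ z, 0 ≤ φ z) (μ : Measure (Euc n)) :
    0 ≤ energy n φ μ :=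
  integral_nonneg fun x => integral_nonneg fun y => hφ0 (x - y)

lemma energy_const_mul (φ : Euc n → ℝ) (κ : ℝ) (μ : Measure (Euc n)) :
    energy n (fun z => κ * φ z) μ = κ * energy n φ μ := by
  unfold energy
  simp_rw [integral_const_mul]

lemma energy_dirac {φ : Euc n → ℝ} (hφ : Measurable φ) (x₀ : Euc n) :
    energy n φ (Measure.dirac x₀) = φ 0 := by
  unfold energy
  have hm1 : ∀ x : Euc n, Measurable fun y : Euc n => φ (x - y) := fun x =>
    hφ.comp (measurable_const.sub measurable_id)
  have h1 : ∀ x : Euc n, ∫ y, φ (x - y) ∂(Measure.dirac x₀) = φ (x - x₀) := fun x =>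
    integral_dirac' _ _ (hm1 x).stronglyMeasurable
  simp_rw [h1]
  have hm2 : Measurable fun x : Euc n => φ (x - x₀) :=
    hφ.comp (measurable_id.sub measurable_const)
  rw [integral_dirac' _ _ hm2.stronglyMeasurable, sub_self]

lemma energy_lower {φ : Euc n → ℝ} {E : Set (Euc n)} {μ : Measure (Euc n)}
    [IsProbabilityMeasure μ] (hμE : μ Eᶜ = 0)
    (hφ : Measurable φ) {B : ℝ} (hB : ∀ z, |φ z| ≤ B) {c : ℝ}
    (hlow : ∀ x ∈ E, ∀ y ∈ E, c ≤ φ (x - y)) : c ≤ energy n φ μ := by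
  have haeE : ∀ᵐ z ∂μ, z ∈ E := by
    rw [ae_iff]
    exact hμE
  have hin : ∀ x ∈ E, c ≤ ∫ y, φ (x - y) ∂μ := by
    intro x hx
    have h := integral_mono_ae (integrable_const c) (integrable_shift hφ hB μ x)
      (haeE.mono fun y hy => hlow x hx y hy)
    simpa using h
  have h := integral_mono_ae (integrable_const c) (potential_integrable hφ hB μ)
    (haeE.mono fun x hx => hin x hx)
  simpa [energy] using h

end S6

namespace S6

lemma phiK_measurable (n : ℕ) (m s θ r : ℝ) : Measurable (phiK n m s θ r) := by
  unfold phiK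
  apply Measurable.ite (measurableSet_lt measurable_norm measurable_const) measurable_const
  apply Measurable.ite (measurableSet_lt measurable_norm measurable_const)
  · fun_prop
  · fun_prop

def ISet (n : ℕ) (m s θ r : ℝ) (E : Set (Euc n)) : Set ℝ :=
  {e : ℝ | ∃ μ : Measure (Euc n), PMeasOn n E μ ∧ e = energy n (phiK n m s θ r) μ}

lemma capacity_eq (n : ℕ) (m s θ r : ℝ) (E : Set (Euc n)) :
    capacity n m s θ r E = (sInf (ISet n m s θ r E))⁻¹ := rfl

lemma one_mem_ISet {n : ℕ} {E : Set (Euc n)} (hEm : MeasurableSet E) (hEne : E.Nonempty)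
    {m s θ r : ℝ} (hr : 0 < r) : (1:ℝ) ∈ ISet n m s θ r E := by
  obtain ⟨x₀, hx₀⟩ := hEne
  refine ⟨Measure.dirac x₀, ⟨inferInstance, ?_⟩, ?_⟩
  · rw [Measure.dirac_apply' _ hEm.compl]
    simp [hx₀]
  · rw [energy_dirac (phiK_measurable n m s θ r)]
    unfold phiK
    simp [norm_zero, hr]

section Key

variable {n : ℕ} {E : Set (Euc n)} (hEm : MeasurableSet E) (hEne : E.Nonempty)
  {D : ℝ} (hD : 1 ≤ D) (hDE : ∀ x ∈ E, ∀ y ∈ E, ‖x - y‖ ≤ D)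
  {θ r : ℝ} (hθ : 0 < θ) (hθ1 : θ ≤ 1) (hr : 0 < r) (hr1 : r < 1)

include hEm hEne hD hDE hθ hθ1 hr hr1

lemma ISet_bddBelow (m s : ℝ) : BddBelow (ISet n m s θ r E) := by
  refine ⟨0, ?_⟩
  rintro e ⟨μ, ⟨hprob, hμE⟩, rfl⟩
  exact energy_nonneg (phiK_nonneg hr.le) μ

lemma sInf_ISet_le_one (m s : ℝ) : sInf (ISet n m s θ r E) ≤ 1 :=
  csInf_le (ISet_bddBelow hEm hEne hD hDE hθ hθ1 hr hr1 m s) (one_mem_ISet hEm hEne hr)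

lemma lb_le_sInf_ISet {m s : ℝ} (hs : 0 ≤ s) (hsm : s ≤ m) :
    r ^ (θ * (m - s) + s) / D ^ m ≤ sInf (ISet n m s θ r E) := by
  refine le_csInf ⟨1, one_mem_ISet hEm hEne hr⟩ ?_
  rintro e ⟨μ, ⟨hprob, hμE⟩, rfl⟩
  have habs : ∀ z : Euc n, |phiK n m s θ r z| ≤ 1 := fun z =>
    abs_le.2 ⟨by linarith [phiK_nonneg (m := m) (s := s) (θ := θ) hr.le z],
      phiK_le_one hr hr1.le hs hsm hθ hθ1 z⟩
  exact energy_lower hμE (phiK_measurable n m s θ r) habs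
    (fun x hx y hy => phiK_lower hr hr1.le hs hsm hθ hθ1 hD (x - y) (hDE x hx y hy))

lemma sInf_ISet_pos {m s : ℝ} (hs : 0 ≤ s) (hsm : s ≤ m) :
    0 < sInf (ISet n m s θ r E) := by
  refine lt_of_lt_of_le ?_ (lb_le_sInf_ISet hEm hEne hD hDE hθ hθ1 hr hr1 hs hsm)
  exact div_pos (Real.rpow_pos_of_pos hr _)
    (Real.rpow_pos_of_pos (lt_of_lt_of_le one_pos hD) m)

lemma one_le_capacity {m s : ℝ} (hs : 0 ≤ s) (hsm : s ≤ m) :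
    1 ≤ capacity n m s θ r E := by
  rw [capacity_eq]
  exact (one_le_inv₀ (sInf_ISet_pos hEm hEne hD hDE hθ hθ1 hr hr1 hs hsm)).2
    (sInf_ISet_le_one hEm hEne hD hDE hθ hθ1 hr hr1 m s)

lemma capacity_le {m s : ℝ} (hs : 0 ≤ s) (hsm : s ≤ m) :
    capacity n m s θ r E ≤ (r ^ (θ * (m - s) + s) / D ^ m)⁻¹ := by
  rw [capacity_eq]
  exact inv_anti₀
    (div_pos (Real.rpow_pos_of_pos hr _) (Real.rpow_pos_of_pos (lt_of_lt_of_le one_pos hD) m))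
    (lb_le_sInf_ISet hEm hEne hD hDE hθ hθ1 hr hr1 hs hsm)

lemma capacity_mono_m {m₁ m₂ s : ℝ} (hs : 0 ≤ s) (hsm : s ≤ m₁) (hm12 : m₁ ≤ m₂) :
    capacity n m₁ s θ r E ≤ capacity n m₂ s θ r E := by
  rw [capacity_eq, capacity_eq]
  refine inv_anti₀ (sInf_ISet_pos hEm hEne hD hDE hθ hθ1 hr hr1 hs (hsm.trans hm12)) ?_
  refine le_csInf ⟨1, one_mem_ISet hEm hEne hr⟩ ?_
  rintro e ⟨μ, ⟨hprob, hμE⟩, rfl⟩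
  have h1 : sInf (ISet n m₂ s θ r E) ≤ energy n (phiK n m₂ s θ r) μ :=
    csInf_le (ISet_bddBelow hEm hEne hD hDE hθ hθ1 hr hr1 m₂ s) ⟨μ, ⟨hprob, hμE⟩, rfl⟩
  refine h1.trans ?_
  exact energy_mono (phiK_measurable n m₂ s θ r) (phiK_measurable n m₁ s θ r)
    (phiK_nonneg hr.le) (phiK_anti_m hr hr1.le hs hθ hθ1 hm12)
    (phiK_le_one hr hr1.le hs hsm hθ hθ1) μ

lemma capacity_lip {m s t : ℝ} (hs : 0 ≤ s) (hst : s ≤ t) (htm : t ≤ m) :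
    capacity n m t θ r E ≤ r ^ ((θ - 1) * (t - s)) * capacity n m s θ r E := by
  have hκ : (0:ℝ) < r ^ ((θ - 1) * (t - s)) := Real.rpow_pos_of_pos hr _
  have hIs : 0 < sInf (ISet n m s θ r E) :=
    sInf_ISet_pos hEm hEne hD hDE hθ hθ1 hr hr1 hs (hst.trans htm)
  -- I_s ≤ κ * I_t
  have hkey : sInf (ISet n m s θ r E) ≤ r ^ ((θ - 1) * (t - s)) * sInf (ISet n m t θ r E) := by
    rw [← div_le_iff₀' hκ]
    refine le_csInf ⟨1, one_mem_ISet hEm hEne hr⟩ ?_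
    rintro e ⟨μ, ⟨hprob, hμE⟩, rfl⟩
    rw [div_le_iff₀' hκ]
    have h1 : sInf (ISet n m s θ r E) ≤ energy n (phiK n m s θ r) μ :=
      csInf_le (ISet_bddBelow hEm hEne hD hDE hθ hθ1 hr hr1 m s) ⟨μ, ⟨hprob, hμE⟩, rfl⟩
    refine h1.trans ?_
    have h2 : energy n (phiK n m s θ r) μ
        ≤ energy n (fun z => r ^ ((θ - 1) * (t - s)) * phiK n m t θ r z) μ := by
      refine energy_mono (phiK_measurable n m s θ r)
        ((phiK_measurable n m t θ r).const_mul _) (phiK_nonneg hr.le)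
        (phiK_le_kappa_mul hr hr1.le hs hst hθ hθ1)
        (B := r ^ ((θ - 1) * (t - s))) ?_ μ
      intro z
      calc r ^ ((θ - 1) * (t - s)) * phiK n m t θ r z
          ≤ r ^ ((θ - 1) * (t - s)) * 1 :=
            mul_le_mul_of_nonneg_left
              (phiK_le_one hr hr1.le (hs.trans hst) htm hθ hθ1 z) hκ.le
        _ = r ^ ((θ - 1) * (t - s)) := mul_one _
    refine h2.trans_eq ?_
    exact energy_const_mul _ _ μ
  rw [capacity_eq, capacity_eq]
  -- from I_s ≤ κ I_t : (I_t)⁻¹ ≤ κ (I_s)⁻¹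
  have hIt : 0 < sInf (ISet n m t θ r E) :=
    sInf_ISet_pos hEm hEne hD hDE hθ hθ1 hr hr1 (hs.trans hst) htm
  rw [← div_le_iff₀' hκ] at hkey
  calc (sInf (ISet n m t θ r E))⁻¹
      ≤ (sInf (ISet n m s θ r E) / r ^ ((θ - 1) * (t - s)))⁻¹ :=
        inv_anti₀ (div_pos hIs hκ) hkey
    _ = r ^ ((θ - 1) * (t - s)) * (sInf (ISet n m s θ r E))⁻¹ := by
        field_simp

end Key

end S6

namespace S6

section Key2

variable {n : ℕ} {E : Set (Euc n)} (hEm : MeasurableSet E) (hEne : E.Nonempty)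
  {D : ℝ} (hD : 1 ≤ D) (hDE : ∀ x ∈ E, ∀ y ∈ E, ‖x - y‖ ≤ D)
  {θ r : ℝ} (hθ : 0 < θ) (hθ1 : θ ≤ 1) (hr : 0 < r) (hr1 : r < 1)

include hEm hEne hD hDE hθ hθ1 hr hr1

lemma negLog_pos : 0 < -Real.log r := by
  have := Real.log_neg hr hr1
  linarith

lemma Cquot_nonneg {m s : ℝ} (hs : 0 ≤ s) (hsm : s ≤ m) : 0 ≤ Cquot n m s θ E r := by
  unfold Cquot
  exact div_nonneg
    (Real.log_nonneg (one_le_capacity hEm hEne hD hDE hθ hθ1 hr hr1 hs hsm))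
    (negLog_pos hEm hEne hD hDE hθ hθ1 hr hr1).le

lemma Cquot_le (hlr : Real.log r ≤ -1) {m s : ℝ} (hs : 0 ≤ s) (hsm : s ≤ m) :
    Cquot n m s θ E r ≤ θ * (m - s) + s + m * Real.log D := by
  have hm0 : 0 ≤ m := hs.trans hsm
  have hD0 : (0:ℝ) < D := lt_of_lt_of_le one_pos hD
  have hL : 0 < -Real.log r := negLog_pos hEm hEne hD hDE hθ hθ1 hr hr1
  have hL1 : 1 ≤ -Real.log r := by linarith
  have hcpos : (0:ℝ) < r ^ (θ * (m - s) + s) / D ^ m :=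
    div_pos (Real.rpow_pos_of_pos hr _) (Real.rpow_pos_of_pos hD0 m)
  have hcappos : (0:ℝ) < capacity n m s θ r E :=
    lt_of_lt_of_le one_pos (one_le_capacity hEm hEne hD hDE hθ hθ1 hr hr1 hs hsm)
  have hlog : Real.log (capacity n m s θ r E)
      ≤ (θ * (m - s) + s) * (-Real.log r) + m * Real.log D := by
    calc Real.log (capacity n m s θ r E)
        ≤ Real.log ((r ^ (θ * (m - s) + s) / D ^ m)⁻¹) :=
          Real.log_le_log hcappos (capacity_le hEm hEne hD hDE hθ hθ1 hr hr1 hs hsm)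
      _ = -(Real.log (r ^ (θ * (m - s) + s)) - Real.log (D ^ m)) := by
          rw [Real.log_inv, Real.log_div (Real.rpow_pos_of_pos hr _).ne'
            (Real.rpow_pos_of_pos hD0 m).ne']
      _ = (θ * (m - s) + s) * (-Real.log r) + m * Real.log D := by
          rw [Real.log_rpow hr, Real.log_rpow hD0]
          ring
  have hlogD : 0 ≤ m * Real.log D := mul_nonneg hm0 (Real.log_nonneg hD)
  unfold Cquot
  rw [div_le_iff₀ hL]
  nlinarith

lemma Cquot_mono_m {m₁ m₂ s : ℝ} (hs : 0 ≤ s) (hsm : s ≤ m₁) (hm12 : m₁ ≤ m₂) :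
    Cquot n m₁ s θ E r ≤ Cquot n m₂ s θ E r := by
  unfold Cquot
  refine div_le_div_of_nonneg_right ?_ (negLog_pos hEm hEne hD hDE hθ hθ1 hr hr1).le
  exact Real.log_le_log
    (lt_of_lt_of_le one_pos (one_le_capacity hEm hEne hD hDE hθ hθ1 hr hr1 hs hsm))
    (capacity_mono_m hEm hEne hD hDE hθ hθ1 hr hr1 hs hsm hm12)

lemma Cquot_lip {m s t : ℝ} (hs : 0 ≤ s) (hst : s ≤ t) (htm : t ≤ m) :
    Cquot n m t θ E r ≤ (1 - θ) * (t - s) + Cquot n m s θ E r := by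
  have hL : 0 < -Real.log r := negLog_pos hEm hEne hD hDE hθ hθ1 hr hr1
  have hκ : (0:ℝ) < r ^ ((θ - 1) * (t - s)) := Real.rpow_pos_of_pos hr _
  have hcs : (0:ℝ) < capacity n m s θ r E :=
    lt_of_lt_of_le one_pos
      (one_le_capacity hEm hEne hD hDE hθ hθ1 hr hr1 hs (hst.trans htm))
  have hct : (0:ℝ) < capacity n m t θ r E :=
    lt_of_lt_of_le one_pos
      (one_le_capacity hEm hEne hD hDE hθ hθ1 hr hr1 (hs.trans hst) htm)
  have hlog : Real.log (capacity n m t θ r E)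
      ≤ (θ - 1) * (t - s) * Real.log r + Real.log (capacity n m s θ r E) := by
    calc Real.log (capacity n m t θ r E)
        ≤ Real.log (r ^ ((θ - 1) * (t - s)) * capacity n m s θ r E) :=
          Real.log_le_log hct (capacity_lip hEm hEne hD hDE hθ hθ1 hr hr1 hs hst htm)
      _ = (θ - 1) * (t - s) * Real.log r + Real.log (capacity n m s θ r E) := by
          rw [Real.log_mul hκ.ne' hcs.ne', Real.log_rpow hr]
  unfold Cquot
  rw [div_le_iff₀ hL, add_mul, div_mul_cancel₀ _ hL.ne']
  have hre : (1 - θ) * (t - s) * (-Real.log r) = (θ - 1) * (t - s) * Real.log r := by ring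
  rw [hre]
  exact hlog

end Key2

end S6


/-- The intermediate dimension profiles are increasing in `m`. -/
theorem statement6 (n m₁ m₂ : ℕ) (hm1 : 1 ≤ m₁) (h12 : m₁ ≤ m₂) (h2n : m₂ ≤ n)
    (E : Set (Euc n)) (hE : IsCompact E) (hEne : E.Nonempty)
    (θ : ℝ) (hθ : θ ∈ Ioc (0:ℝ) 1) :
    (∀ d₁ d₂ : ℝ, IsLowerDimProfile n m₁ θ E d₁ → IsLowerDimProfile n m₂ θ E d₂ → d₁ ≤ d₂) ∧
    (∀ d₁ d₂ : ℝ, IsUpperDimProfile n m₁ θ E d₁ → IsUpperDimProfile n m₂ θ E d₂ → d₁ ≤ d₂) := by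
  obtain ⟨hθ0, hθ1⟩ := hθ
  have hcl : closure E = E := hE.isClosed.closure_eq
  have hEm : MeasurableSet E := hE.isClosed.measurableSet
  obtain ⟨R, hR⟩ := hE.isBounded.subset_closedBall (0 : Euc n)
  set D := max 1 (2 * R) with hDdef
  have hD : (1:ℝ) ≤ D := le_max_left _ _
  have hDE : ∀ x ∈ E, ∀ y ∈ E, ‖x - y‖ ≤ D := by
    intro x hx y hy
    have hx' : ‖x‖ ≤ R := mem_closedBall_zero_iff.1 (hR hx)
    have hy' : ‖y‖ ≤ R := mem_closedBall_zero_iff.1 (hR hy)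
    calc ‖x - y‖ ≤ ‖x‖ + ‖y‖ := norm_sub_le x y
      _ ≤ 2 * R := by linarith
      _ ≤ D := le_max_right _ _
  have hm12 : (m₁ : ℝ) ≤ (m₂ : ℝ) := Nat.cast_le.2 h12
  have hev : ∀ᶠ rr in 𝓝[>] (0:ℝ), 0 < rr ∧ rr < 1 ∧ Real.log rr ≤ -1 := by
    have h1 : Ioo (0:ℝ) (Real.exp (-1)) ∈ 𝓝[>] (0:ℝ) :=
      Ioo_mem_nhdsGT_of_mem ⟨le_refl 0, Real.exp_pos _⟩
    filter_upwards [h1] with rr hrr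
    have he1 : Real.exp (-1 : ℝ) < 1 := by
      rw [← Real.exp_zero]
      exact Real.exp_lt_exp.2 (by norm_num)
    refine ⟨hrr.1, lt_trans hrr.2 he1, ?_⟩
    have h2 := Real.log_le_log hrr.1 hrr.2.le
    rwa [Real.log_exp] at h2
  have hBdAbove : ∀ m d : ℝ, 0 ≤ d → d ≤ m →
      IsBoundedUnder (· ≤ ·) (𝓝[>] (0:ℝ)) (fun rr => Cquot n m d θ E rr) := by
    intro m d h0 hdm
    refine ⟨θ * (m - d) + d + m * Real.log D, ?_⟩
    rw [eventually_map]
    filter_upwards [hev] with rr hrr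
    exact S6.Cquot_le hEm hEne hD hDE hθ0 hθ1 hrr.1 hrr.2.1 hrr.2.2 h0 hdm
  have hBdBelow : ∀ m d : ℝ, 0 ≤ d → d ≤ m →
      IsBoundedUnder (· ≥ ·) (𝓝[>] (0:ℝ)) (fun rr => Cquot n m d θ E rr) := by
    intro m d h0 hdm
    refine ⟨0, ?_⟩
    rw [eventually_map]
    filter_upwards [hev] with rr hrr
    exact S6.Cquot_nonneg hEm hEne hD hDE hθ0 hθ1 hrr.1 hrr.2.1 h0 hdm
  constructor
  · intro d₁ d₂ h₁ h₂
    rw [IsLowerDimProfile, hcl] at h₁ h₂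
    obtain ⟨⟨hd₁0, hd₁m⟩, hlim₁⟩ := h₁
    obtain ⟨⟨hd₂0, hd₂m⟩, hlim₂⟩ := h₂
    by_contra hcon
    push_neg at hcon
    have hd₁m₂ : d₁ ≤ (m₂ : ℝ) := hd₁m.trans hm12
    set c := (1 - θ) * (d₁ - d₂) with hc
    have hA : ∀ᶠ rr in 𝓝[>] (0:ℝ),
        Cquot n m₁ d₁ θ E rr - c ≤ Cquot n m₂ d₂ θ E rr := by
      filter_upwards [hev] with rr hrr
      obtain ⟨hr0, hr1, _⟩ := hrr
      have step1 : Cquot n (m₂:ℝ) d₁ θ E rr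
          ≤ (1 - θ) * (d₁ - d₂) + Cquot n (m₂:ℝ) d₂ θ E rr :=
        S6.Cquot_lip hEm hEne hD hDE hθ0 hθ1 hr0 hr1 hd₂0 hcon.le hd₁m₂
      have step2 : Cquot n (m₁:ℝ) d₁ θ E rr ≤ Cquot n (m₂:ℝ) d₁ θ E rr :=
        S6.Cquot_mono_m hEm hEne hD hDE hθ0 hθ1 hr0 hr1 hd₁0 hd₁m hm12
      rw [hc]
      linarith
    have hfinal : d₁ - c ≤ d₂ := by
      refine le_of_forall_pos_le_add fun ε hε => ?_
      have hblt : d₁ - ε < liminf (fun rr => Cquot n (m₁:ℝ) d₁ θ E rr) (𝓝[>] (0:ℝ)) := by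
        rw [hlim₁]; linarith
      have hev1 := eventually_lt_of_lt_liminf hblt (hBdBelow m₁ d₁ hd₁0 hd₁m)
      have hev2 : ∀ᶠ rr in 𝓝[>] (0:ℝ), d₁ - ε - c ≤ Cquot n (m₂:ℝ) d₂ θ E rr := by
        filter_upwards [hev1, hA] with rr hx hy
        linarith
      have h3 := le_liminf_of_le ((hBdAbove m₂ d₂ hd₂0 hd₂m).isCoboundedUnder_ge) hev2
      rw [hlim₂] at h3
      linarith
    rw [hc] at hfinal
    nlinarith [mul_pos hθ0 (sub_pos.2 hcon)]
  · intro d₁ d₂ h₁ h₂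
    rw [IsUpperDimProfile, hcl] at h₁ h₂
    obtain ⟨⟨hd₁0, hd₁m⟩, hlim₁⟩ := h₁
    obtain ⟨⟨hd₂0, hd₂m⟩, hlim₂⟩ := h₂
    by_contra hcon
    push_neg at hcon
    have hd₁m₂ : d₁ ≤ (m₂ : ℝ) := hd₁m.trans hm12
    set c := (1 - θ) * (d₁ - d₂) with hc
    have hA : ∀ᶠ rr in 𝓝[>] (0:ℝ),
        Cquot n m₁ d₁ θ E rr - c ≤ Cquot n m₂ d₂ θ E rr := by
      filter_upwards [hev] with rr hrr
      obtain ⟨hr0, hr1, _⟩ := hrr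
      have step1 : Cquot n (m₂:ℝ) d₁ θ E rr
          ≤ (1 - θ) * (d₁ - d₂) + Cquot n (m₂:ℝ) d₂ θ E rr :=
        S6.Cquot_lip hEm hEne hD hDE hθ0 hθ1 hr0 hr1 hd₂0 hcon.le hd₁m₂
      have step2 : Cquot n (m₁:ℝ) d₁ θ E rr ≤ Cquot n (m₂:ℝ) d₁ θ E rr :=
        S6.Cquot_mono_m hEm hEne hD hDE hθ0 hθ1 hr0 hr1 hd₁0 hd₁m hm12
      rw [hc]
      linarith
    have hfinal : d₁ - c ≤ d₂ := by
      refine le_of_forall_pos_le_add fun ε hε => ?_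
      have hblt : d₁ - ε < limsup (fun rr => Cquot n (m₁:ℝ) d₁ θ E rr) (𝓝[>] (0:ℝ)) := by
        rw [hlim₁]; linarith
      have hfreq := frequently_lt_of_lt_limsup
        ((hBdBelow m₁ d₁ hd₁0 hd₁m).isCoboundedUnder_le) hblt
      have hfreq2 : ∃ᶠ rr in 𝓝[>] (0:ℝ),
          d₁ - ε - c ≤ Cquot n (m₂:ℝ) d₂ θ E rr := by
        refine (hfreq.and_eventually hA).mono ?_
        rintro rr ⟨hx, hy⟩
        linarith
      have h3 := le_limsup_of_frequently_le hfreq2 (hBdAbove m₂ d₂ hd₂0 hd₂m)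
      rw [hlim₂] at h3
      linarith
    rw [hc] at hfinal
    nlinarith [mul_pos hθ0 (sub_pos.2 hcon)]
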